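/- Let q = 2k-1 be an odd prime power with q ≡ 1 (mod 4), χ the quadratic character on GF(q), and ω a complex number of modulus 1. For any nonzero b in GF(q), the sum over all a in GF(q) with a ≠ 0 and a ≠ -b of ω^(χ(a) - χ(a+b)) equals (k-2) + (k-1)·Re(ω²). -/

import Mathlib

open Finset

lemma qc_shift_sum (F : Type*) [Field F] [Fintype F] [DecidableEq F]
    (hF : ringChar F ≠ 2) (b : F) (hb : b ≠ 0) :
    ∑ a : F, (quadraticChar F a) * (quadraticChar F (a + b)) = -1 := by
  have h0 : ∑ a : F, (quadraticChar F a) * (quadraticChar F (a + b)) =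
      ∑ a ∈ univ.filter (fun a : F => a ≠ 0),
        (quadraticChar F a) * (quadraticChar F (a + b)) := by
    rw [Finset.sum_filter_of_ne]
    intro a _ h
    intro ha
    simp [ha] at h
  rw [h0]
  have key : ∑ a ∈ univ.filter (fun a : F => a ≠ 0),
      (quadraticChar F a) * (quadraticChar F (a + b)) =
      ∑ c ∈ univ.filter (fun c : F => c ≠ 1), quadraticChar F c := by
    refine Finset.sum_nbij' (fun a => 1 + b * a⁻¹) (fun c => b * (c - 1)⁻¹) ?_ ?_ ?_ ?_ ?_
    · intro a ha
      simp only [mem_filter, mem_univ, true_and] at ha ⊢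
      intro h
      have h2 : b * a⁻¹ = 0 := by linear_combination h
      rcases mul_eq_zero.mp h2 with h' | h'
      · exact hb h'
      · exact ha (inv_eq_zero.mp h')
    · intro c hc
      simp only [mem_filter, mem_univ, true_and] at hc ⊢
      intro h
      rcases mul_eq_zero.mp h with h' | h'
      · exact hb h'
      · exact hc (by rwa [inv_eq_zero, sub_eq_zero] at h')
    · intro a ha
      simp only [mem_filter, mem_univ, true_and] at ha
      field_simp
      simp [hb]
    · intro c hc
      simp only [mem_filter, mem_univ, true_and] at hc
      have hc1 : c - 1 ≠ 0 := sub_ne_zero.mpr hc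
      field_simp
      ring
    · intro a ha
      simp only [mem_filter, mem_univ, true_and] at ha
      have h2 : a + b = a * (1 + b * a⁻¹) := by field_simp
      rw [h2, map_mul, ← mul_assoc, ← pow_two, quadraticChar_sq_one ha, one_mul]
  rw [key]
  have h1 : ∑ c ∈ univ.filter (fun c : F => c ≠ 1), quadraticChar F c =
      (∑ c : F, quadraticChar F c) - quadraticChar F 1 := by
    rw [← Finset.sum_filter_add_sum_filter_not univ (fun c : F => c ≠ 1)
      (fun c => quadraticChar F c)]
    have h2 : univ.filter (fun c : F => ¬ c ≠ 1) = {1} := by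
      ext c; simp [not_not]
    rw [h2]
    simp
  rw [h1, quadraticChar_sum_zero hF]
  simp

lemma pt_identity (ω : ℂ) (hω : ω ≠ 0) (u v : ℤ) (hu : u = 1 ∨ u = -1) (hv : v = 1 ∨ v = -1) :
    ω ^ (u - v) = (2 + ω ^ 2 + (ω ^ 2)⁻¹) / 4
      + (2 - ω ^ 2 - (ω ^ 2)⁻¹) / 4 * ((u * v : ℤ) : ℂ)
      + (ω ^ 2 - (ω ^ 2)⁻¹) / 4 * ((u - v : ℤ) : ℂ) := by
  rw [zpow_sub₀ hω]
  rcases hu with h1 | h1 <;> rcases hv with h2 | h2 <;> subst h1 h2 <;>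
    simp only [zpow_one, zpow_neg] <;> push_cast <;> field_simp <;> ring

theorem amazing_formula (F : Type*) [Field F] [Fintype F] [DecidableEq F]
    (p : ℕ) (α : ℕ) (hp : p.Prime) (hodd : p ≠ 2)
    (hcard : Fintype.card F = p ^ α) (hmod : Fintype.card F % 4 = 1)
    (k : ℕ) (hk : Fintype.card F = 2 * k - 1) (hk2 : 2 ≤ k)
    (ω : ℂ) (hω : ‖ω‖ = 1) (b : F) (hb : b ≠ 0) :
    ∑ a ∈ univ.filter (fun a : F => a ≠ 0 ∧ a ≠ -b),
        ω ^ ((quadraticChar F a - quadraticChar F (a + b) : ℤ)) =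
      ((k : ℂ) - 2) + ((k : ℂ) - 1) * ((ω ^ 2).re : ℂ) := by
  have hω0 : ω ≠ 0 := by
    intro h; rw [h] at hω; simp at hω
  have hω20 : ω ^ 2 ≠ 0 := pow_ne_zero 2 hω0
  -- ring characteristic is odd
  have hF2 : ringChar F ≠ 2 := by
    intro h
    have inst : CharP F (ringChar F) := ringChar.charP F
    obtain ⟨n, hp', hcard'⟩ := FiniteField.card F (ringChar F)
    rw [h] at hcard'
    have h2 : (2 : ℕ) ∣ Fintype.card F := hcard' ▸ dvd_pow_self 2 n.pos.ne'
    omega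
  have hnb0 : (-b : F) ≠ 0 := neg_ne_zero.mpr hb
  -- χ(-1) = 1
  have hχm1 : quadraticChar F (-1 : F) = 1 := by
    rw [quadraticChar_one_iff_isSquare (neg_ne_zero.mpr (one_ne_zero' F))]
    rw [FiniteField.isSquare_neg_one_iff]
    omega
  have hχnb : quadraticChar F (-b) = quadraticChar F b := by
    have : (-b : F) = -1 * b := by ring
    rw [this, map_mul, hχm1, one_mul]
  set S := univ.filter (fun a : F => a ≠ 0 ∧ a ≠ -b) with hS
  have hSsdiff : S = univ \ {0, -b} := by
    ext a
    simp [hS, mem_sdiff, and_comm]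
  have hsub : ({0, -b} : Finset F) ⊆ univ := subset_univ _
  -- cardinality of S
  have hcardS : S.card = 2 * k - 3 := by
    rw [hSsdiff, card_sdiff_of_subset hsub, card_univ, hk]
    rw [card_insert_of_notMem (by simp [hnb0.symm]), card_singleton]
    omega
  -- sum of products
  have hsum_mul : ∑ a ∈ S, (quadraticChar F a) * (quadraticChar F (a + b)) = -1 := by
    rw [hSsdiff, Finset.sum_sdiff_eq_sub hsub, qc_shift_sum F hF2 b hb]
    rw [Finset.sum_pair (by simp [hnb0.symm] : (0 : F) ≠ -b)]
    simp
  -- sum of differences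
  have hsum_diff : ∑ a ∈ S, ((quadraticChar F a : ℤ) - quadraticChar F (a + b)) = 0 := by
    rw [hSsdiff, Finset.sum_sdiff_eq_sub hsub]
    rw [Finset.sum_sub_distrib, quadraticChar_sum_zero hF2]
    have hshift : ∑ a : F, (quadraticChar F (a + b) : ℤ) = ∑ a : F, (quadraticChar F a : ℤ) := by
      exact Fintype.sum_equiv (Equiv.addRight b) _ _ (fun a => rfl)
    rw [hshift, quadraticChar_sum_zero hF2]
    rw [Finset.sum_pair (by simp [hnb0.symm] : (0 : F) ≠ -b)]
    simp [hχnb]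
  -- pointwise identity
  have hpt : ∀ a ∈ S, ω ^ ((quadraticChar F a - quadraticChar F (a + b) : ℤ)) =
      (2 + ω ^ 2 + (ω ^ 2)⁻¹) / 4
      + (2 - ω ^ 2 - (ω ^ 2)⁻¹) / 4 * ((quadraticChar F a * quadraticChar F (a + b) : ℤ) : ℂ)
      + (ω ^ 2 - (ω ^ 2)⁻¹) / 4 * (((quadraticChar F a : ℤ) - quadraticChar F (a + b) : ℤ) : ℂ) := by
    intro a ha
    simp only [hS, mem_filter, mem_univ, true_and] at ha
    obtain ⟨ha0, hanb⟩ := ha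
    have hab0 : a + b ≠ 0 := fun h => hanb (by linear_combination h)
    exact pt_identity ω hω0 _ _ (quadraticChar_dichotomy ha0) (quadraticChar_dichotomy hab0)
  rw [Finset.sum_congr rfl hpt]
  rw [Finset.sum_add_distrib, Finset.sum_add_distrib, Finset.sum_const, ← Finset.mul_sum,
    ← Finset.mul_sum, hcardS]
  have hc1 : ∑ a ∈ S, ((quadraticChar F a * quadraticChar F (a + b) : ℤ) : ℂ) = -1 := by
    rw [← Int.cast_sum, hsum_mul]; norm_num
  have hc2 : ∑ a ∈ S, (((quadraticChar F a : ℤ) - quadraticChar F (a + b) : ℤ) : ℂ) = 0 := by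
    rw [← Int.cast_sum, hsum_diff]; norm_num
  rw [hc1, hc2, mul_zero, add_zero, nsmul_eq_mul]
  have hcast : ((2 * k - 3 : ℕ) : ℂ) = 2 * (k : ℂ) - 3 := by
    have h3 : 3 ≤ 2 * k := by omega
    push_cast [Nat.cast_sub h3]
    ring
  rw [hcast]
  -- (ω²)⁻¹ = 2 Re(ω²) - ω²
  have hinv : (ω ^ 2)⁻¹ = 2 * ((ω ^ 2).re : ℂ) - ω ^ 2 := by
    have habs : ‖ω ^ 2‖ = 1 := by
      rw [norm_pow]
      simp [hω]
    rw [Complex.inv_eq_conj habs]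
    have := Complex.add_conj (ω ^ 2)
    push_cast at this ⊢
    linear_combination this
  rw [hinv]
  ring
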